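/- Define D(x,n,j) = x_{j−n} · ∏_{m=j−n+1}^{j+1} (1−x_m). Let x ∈ {0,1}^ℤ and y = F156(x). Then for all n ≥ 2 and j ∈ ℤ, D(y,n,j) = D(x,n+1,j). -/

import Mathlib

/-- Polynomial form of the local function of rule 156. -/
def f156 (a b c : ℤ) : ℤ := (1 - a) * b + a * b * c + a * (1 - b) * (1 - c)

/-- Diagonal-line term in the decomposition of the rule-156 pattern. -/
noncomputable def D (x : ℤ → ℤ) (n : ℕ) (j : ℤ) : ℤ :=
  x (j - n) * ∏ m ∈ Finset.Icc (j - n + 1) (j + 1), (1 - x m)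

theorem stmt11 (x : ℤ → ℤ) (hx : ∀ i, x i = 0 ∨ x i = 1)
    (y : ℤ → ℤ) (hy : ∀ i, y i = f156 (x (i - 1)) (x i) (x (i + 1)))
    (n : ℕ) (hn : 2 ≤ n) (j : ℤ) :
    D y n j = D x (n + 1) j := by
  have hn' : (2:ℤ) ≤ (n:ℤ) := by exact_mod_cast hn
  have hD2 : D x (n+1) j = x (j - n - 1) * ∏ m ∈ Finset.Icc (j - n) (j + 1), (1 - x m) := by
    unfold D
    simp only [Nat.cast_add, Nat.cast_one]
    rw [show j - ((n:ℤ)+1) = j - n - 1 by ring, show j - (n:ℤ) - 1 + 1 = j - n by ring]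
  rw [hD2]
  unfold D
  by_cases hA : ∃ m ∈ Finset.Icc (j - (n:ℤ)) (j+1), x m = 1
  · -- both sides zero
    set S := (Finset.Icc (j - (n:ℤ)) (j+1)).filter (fun m => x m = 1) with hS
    have hSne : S.Nonempty := by
      obtain ⟨m, hm, hxm⟩ := hA
      exact ⟨m, Finset.mem_filter.2 ⟨hm, hxm⟩⟩
    set m0 := S.min' hSne with hm0def
    have hm0S : m0 ∈ S := Finset.min'_mem S hSne
    have hm0Icc : m0 ∈ Finset.Icc (j - (n:ℤ)) (j+1) := (Finset.mem_filter.1 hm0S).1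
    have hxm0 : x m0 = 1 := (Finset.mem_filter.1 hm0S).2
    have hmin : ∀ m ∈ Finset.Icc (j - (n:ℤ)) (j+1), x m = 1 → m0 ≤ m := fun m hm hx1 =>
      Finset.min'_le S m (Finset.mem_filter.2 ⟨hm, hx1⟩)
    have hbound := Finset.mem_Icc.1 hm0Icc
    have hRHS : x (j - n - 1) * ∏ m ∈ Finset.Icc (j - (n:ℤ)) (j+1), (1 - x m) = 0 := by
      rw [Finset.prod_eq_zero hm0Icc (by rw [hxm0]; ring)]; ring
    rw [hRHS]
    suffices hW : ∃ m1 ∈ Finset.Icc (j - (n:ℤ) + 1) (j+1), y m1 = 1 by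
      obtain ⟨m1, hm1, hym1⟩ := hW
      rw [Finset.prod_eq_zero hm1 (by rw [hym1]; ring)]; ring
    by_cases hm0k : m0 = j - (n:ℤ)
    · set k := j - (n:ℤ) with hkdef
      have hxk : x k = 1 := hm0k ▸ hxm0
      rcases hx (k+1) with h1 | h1 <;> rcases hx (k+2) with h2 | h2
      · refine ⟨k+1, Finset.mem_Icc.2 ⟨by omega, by omega⟩, ?_⟩
        rw [hy, show k+1-1 = k by ring, show k+1+1 = k+2 by ring, hxk, h1, h2]
        simp [f156]
      · refine ⟨k+2, Finset.mem_Icc.2 ⟨by omega, by omega⟩, ?_⟩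
        rw [hy, show k+2-1 = k+1 by ring, h1, h2]
        simp [f156]
      · -- x(k+1)=1, x(k+2)=0
        rcases hx (k+3) with h3 | h3
        · refine ⟨k+2, Finset.mem_Icc.2 ⟨by omega, by omega⟩, ?_⟩
          rw [hy, show k+2-1 = k+1 by ring, show k+2+1 = k+3 by ring, h1, h2, h3]
          simp [f156]
        · refine ⟨k+3, Finset.mem_Icc.2 ⟨by omega, by omega⟩, ?_⟩
          rw [hy, show k+3-1 = k+2 by ring, h2, h3]
          simp [f156]
      · -- x(k+1)=1, x(k+2)=1
        refine ⟨k+1, Finset.mem_Icc.2 ⟨by omega, by omega⟩, ?_⟩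
        rw [hy, show k+1-1 = k by ring, show k+1+1 = k+2 by ring, hxk, h1, h2]
        simp [f156]
    · have hm0gt : j - (n:ℤ) + 1 ≤ m0 := by omega
      have hxprev : x (m0 - 1) = 0 := by
        rcases hx (m0 - 1) with h | h
        · exact h
        · exfalso
          have := hmin (m0-1) (Finset.mem_Icc.2 ⟨by omega, by omega⟩) h
          omega
      refine ⟨m0, Finset.mem_Icc.2 ⟨hm0gt, hbound.2⟩, ?_⟩
      rw [hy, hxprev, hxm0]
      simp [f156]
  · -- all x zero on Icc
    push_neg at hA
    have hzero : ∀ m ∈ Finset.Icc (j - (n:ℤ)) (j+1), x m = 0 := fun m hm =>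
      (hx m).resolve_right (hA m hm)
    have hz0 : x (j - (n:ℤ)) = 0 := hzero _ (Finset.mem_Icc.2 ⟨le_refl _, by omega⟩)
    have hz1 : x (j - (n:ℤ) + 1) = 0 := hzero _ (Finset.mem_Icc.2 ⟨by omega, by omega⟩)
    rcases hx (j - n - 1) with h0 | h0
    · have hyk : y (j - (n:ℤ)) = 0 := by
        rw [hy, show j - (n:ℤ) - 1 = j - n - 1 by rfl, h0, hz0]
        simp [f156]
      rw [hyk, h0]; ring
    · have hyk : y (j - (n:ℤ)) = 1 := by
        rw [hy, h0, hz0, hz1]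
        simp [f156]
      have p1 : ∏ m ∈ Finset.Icc (j - (n:ℤ) + 1) (j+1), (1 - y m) = 1 :=
        Finset.prod_eq_one (fun m hm => by
          have hb := Finset.mem_Icc.1 hm
          have hzm : x m = 0 := hzero m (Finset.mem_Icc.2 ⟨by omega, hb.2⟩)
          have hzm' : x (m-1) = 0 := hzero (m-1) (Finset.mem_Icc.2 ⟨by omega, by omega⟩)
          rw [hy, hzm, hzm']
          simp [f156])
      have p2 : ∏ m ∈ Finset.Icc (j - (n:ℤ)) (j+1), (1 - x m) = 1 :=
        Finset.prod_eq_one (fun m hm => by rw [hzero m hm]; ring)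
      rw [hyk, h0, p1, p2]
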